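/- arXiv:0810.0591 — 2 statements merged into one kernel-verified Lean document; each statement's English description precedes it below -/
import Mathlib

section
/- Let z ∈ ℂ. The stabilizer of z under the natural action of Γ on ℂ is nontrivial (i.e., not the trivial subgroup) if and only if 2z lies in ℤ[i], that is, if and only if there exist integers a and b with 2z = a + b·i. -/
open Complex

/-- Every complex fourth root of unity is a Gaussian integer. -/
lemma exists_gaussian_of_pow_four_eq_one {u : ℂ} (hu : u ^ 4 = 1) :
    ∃ g : GaussianInt, (g : ℂ) = u := by
  have h1 : (u ^ 2 - 1) * (u ^ 2 + 1) = 0 := by linear_combination hu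
  rcases mul_eq_zero.mp h1 with h | h
  · have h2 : (u - 1) * (u + 1) = 0 := by linear_combination h
    rcases mul_eq_zero.mp h2 with h3 | h3
    · exact ⟨1, by rw [map_one, (sub_eq_zero.mp h3).symm]⟩
    · exact ⟨-1, by rw [map_neg, map_one, (eq_neg_of_add_eq_zero_left h3).symm]⟩
  · have h2 : (u - I) * (u + I) = 0 := by linear_combination h - Complex.I_sq
    rcases mul_eq_zero.mp h2 with h3 | h3
    · refine ⟨⟨0, 1⟩, ?_⟩
      rw [sub_eq_zero.mp h3, GaussianInt.toComplex_def']
      simp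
    · refine ⟨⟨0, -1⟩, ?_⟩
      rw [eq_neg_of_add_eq_zero_left h3, GaussianInt.toComplex_def']
      push_cast
      ring

/-- The group `Γ` of bijections of `ℂ` of the form `z ↦ u·z + λ` with `u⁴ = 1` and
`λ` in the image of the Gaussian integers, viewed as a subgroup of `Equiv.Perm ℂ`. -/
def GammaGroup : Subgroup (Equiv.Perm ℂ) where
  carrier := {e | ∃ u lam : ℂ, u ^ 4 = 1 ∧ (∃ g : GaussianInt, (g : ℂ) = lam) ∧
    ∀ z : ℂ, e z = u * z + lam}
  one_mem' := ⟨1, 0, one_pow 4, ⟨0, map_zero _⟩, fun z => by simp⟩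
  mul_mem' := by
    rintro f g ⟨u₁, lam₁, hu₁, ⟨g₁, hg₁⟩, hf⟩ ⟨u₂, lam₂, hu₂, ⟨g₂, hg₂⟩, hg⟩
    obtain ⟨gu₁, hgu₁⟩ := exists_gaussian_of_pow_four_eq_one hu₁
    refine ⟨u₁ * u₂, u₁ * lam₂ + lam₁, by rw [mul_pow, hu₁, hu₂, one_mul],
      ⟨gu₁ * g₂ + g₁, by rw [map_add, map_mul, hgu₁, hg₂, hg₁]⟩, fun z => ?_⟩
    show f (g z) = _
    rw [hg, hf]
    ring
  inv_mem' := by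
    rintro e ⟨u, lam, hu, ⟨g, hg⟩, he⟩
    obtain ⟨gu, hgu⟩ := exists_gaussian_of_pow_four_eq_one hu
    refine ⟨u ^ 3, -(u ^ 3 * lam), by rw [← pow_mul, mul_comm, pow_mul, hu, one_pow],
      ⟨-(gu ^ 3 * g), by rw [map_neg, map_mul, map_pow, hgu, hg]⟩, fun z => ?_⟩
    have key : e (u ^ 3 * z + -(u ^ 3 * lam)) = z := by
      rw [he]; linear_combination (z - lam) * hu
    have h2 : e (e⁻¹ z) = e (u ^ 3 * z + -(u ^ 3 * lam)) := by
      rw [key]; exact e.apply_symm_apply z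
    exact e.injective h2

/-- The rotation `c₀ : z ↦ i·z`. -/
noncomputable def c0 : Equiv.Perm ℂ := Equiv.mulLeft₀ I I_ne_zero

/-- The map `c₁ : z ↦ 1 + i·z`. -/
noncomputable def c1 : Equiv.Perm ℂ := (Equiv.mulLeft₀ I I_ne_zero).trans (Equiv.addLeft 1)

lemma c0_apply (z : ℂ) : c0 z = I * z := rfl

lemma c1_apply (z : ℂ) : c1 z = 1 + I * z := rfl

lemma c0_mem : c0 ∈ GammaGroup :=
  ⟨I, 0, Complex.I_pow_four, ⟨0, map_zero _⟩, fun z => by rw [c0_apply, add_zero]⟩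

lemma c1_mem : c1 ∈ GammaGroup :=
  ⟨I, 1, Complex.I_pow_four, ⟨1, map_one _⟩, fun z => by rw [c1_apply, add_comm]⟩

/-- A point `z ∈ ℂ` has nontrivial stabilizer in `Γ` if and only if
`2z ∈ ℤ[i]`. -/
theorem stmt10 (z : ℂ) :
    MulAction.stabilizer GammaGroup z ≠ ⊥ ↔
      ∃ a b : ℤ, 2 * z = (a : ℂ) + (b : ℂ) * Complex.I := by
  rw [Subgroup.ne_bot_iff_exists_ne_one]
  constructor
  · rintro ⟨⟨⟨e, he⟩, hez⟩, hne⟩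
    obtain ⟨u, lam, hu, ⟨g, hg⟩, hf⟩ := he
    have hfix : u * z + lam = z := by
      have h0 : e z = z := hez
      rw [hf z] at h0; exact h0
    suffices hsuff : ∃ h : GaussianInt, (h : ℂ) = 2 * z by
      obtain ⟨h, hh⟩ := hsuff
      exact ⟨h.re, h.im, by rw [← hh, GaussianInt.toComplex_def]⟩
    have h1 : (u - 1) * ((u + 1) * ((u - I) * (u + I))) = 0 := by
      linear_combination hu + (1 - u^2) * Complex.I_sq
    have hu1 : u ≠ 1 := by
      intro h
      apply hne
      apply Subtype.ext
      apply Subtype.ext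
      apply Equiv.ext
      intro w
      have hl : lam = 0 := by linear_combination hfix - z * h
      show e w = w
      rw [hf w, h, hl]; ring
    rcases mul_eq_zero.mp h1 with h | h
    · exact absurd (sub_eq_zero.mp h) hu1
    rcases mul_eq_zero.mp h with h | h
    · have hu2 : u = -1 := eq_neg_of_add_eq_zero_left h
      exact ⟨g, by rw [hg]; linear_combination hfix - z * hu2⟩
    rcases mul_eq_zero.mp h with h | h
    · have hu2 : u = I := sub_eq_zero.mp h
      refine ⟨⟨1, 1⟩ * g, ?_⟩
      rw [map_mul, hg, GaussianInt.toComplex_def']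
      push_cast
      linear_combination (1 + I) * hfix - (1 + I) * z * hu2 - z * Complex.I_sq
    · have hu2 : u = -I := eq_neg_of_add_eq_zero_left h
      refine ⟨⟨1, -1⟩ * g, ?_⟩
      rw [map_mul, hg, GaussianInt.toComplex_def']
      push_cast
      linear_combination (1 - I) * hfix - (1 - I) * z * hu2 - z * Complex.I_sq
  · rintro ⟨a, b, hab⟩
    set e : Equiv.Perm ℂ := (Equiv.neg ℂ).trans (Equiv.addLeft (2 * z)) with he
    have heapp : ∀ w, e w = -w + 2 * z := fun w => by
      simp [he, Equiv.addLeft, add_comm]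
    have hmem : e ∈ GammaGroup := by
      refine ⟨-1, 2 * z, by norm_num, ⟨⟨a, b⟩, ?_⟩, fun w => by rw [heapp w]; ring⟩
      rw [GaussianInt.toComplex_def', hab]
    refine ⟨⟨⟨e, hmem⟩, ?_⟩, ?_⟩
    · show e z = z
      rw [heapp]; ring
    · intro hcon
      have h1 : e (z + 1) = z + 1 := by
        have := congrArg Subtype.val (congrArg Subtype.val hcon)
        exact congrFun (congrArg _ this) (z + 1)
      rw [heapp] at h1
      have : (1 : ℂ) = -1 := by linear_combination -h1
      norm_num at this
end

section
/- Let Δ be a subgroup of Γ whose index is odd (in particular finite). Then Δ contains an element of order 4. -/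
open Complex

lemma c0_pow_four : c0 ^ 4 = 1 := by
  ext z
  simp only [pow_succ, pow_zero, one_mul, Equiv.Perm.mul_apply, c0_apply,
    Equiv.Perm.one_apply]
  linear_combination z * Complex.I_pow_four

lemma orderOf_c0 : orderOf c0 = 4 := by
  have hd : orderOf c0 ∣ 4 := orderOf_dvd_of_pow_eq_one c0_pow_four
  have h2 : ¬ orderOf c0 ∣ 2 := by
    intro h2
    have := orderOf_dvd_iff_pow_eq_one.mp h2
    have h1 : (c0 ^ 2) (1 : ℂ) = 1 := by rw [this]; rfl
    simp only [pow_succ, pow_zero, one_mul, Equiv.Perm.mul_apply, c0_apply,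
      mul_one, Complex.I_mul_I] at h1
    norm_num at h1
  have hle : orderOf c0 ≤ 4 := Nat.le_of_dvd (by norm_num) hd
  interval_cases hn : orderOf c0 <;> revert hd h2 <;> decide

/-- A subgroup of `Γ` of odd index contains an element of order `4`. -/
theorem stmt11 (Δ : Subgroup GammaGroup) (h : Odd Δ.index) :
    ∃ g ∈ Δ, orderOf g = 4 := by
  set x : GammaGroup := ⟨c0, c0_mem⟩ with hxdef
  have hx4 : orderOf x = 4 := by
    rw [← orderOf_submonoid]; exact orderOf_c0
  haveI : Δ.FiniteIndex := ⟨by intro h0; rw [h0] at h; simp [Nat.odd_iff] at h⟩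
  have hP : IsPGroup 2 (Subgroup.zpowers x) :=
    IsPGroup.of_card (n := 2) (by rw [Nat.card_zpowers, hx4]; norm_num)
  have hcard : ¬ (2 : ℕ) ∣ Nat.card (GammaGroup ⧸ Δ) := by
    have : Nat.card (GammaGroup ⧸ Δ) = Δ.index := rfl
    rw [this]
    intro hdvd
    exact (Nat.not_odd_iff_even.mpr (even_iff_two_dvd.mpr hdvd)) h
  obtain ⟨q, hq⟩ := hP.nonempty_fixed_point_of_prime_not_dvd_card (GammaGroup ⧸ Δ) hcard
  induction q using QuotientGroup.induction_on with
  | H g =>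
    have hxg : (x : GammaGroup) • (QuotientGroup.mk g : GammaGroup ⧸ Δ) = QuotientGroup.mk g := by
      have := hq ⟨x, Subgroup.mem_zpowers x⟩
      exact this
    rw [MulAction.Quotient.smul_mk] at hxg
    have hmem : (x * g)⁻¹ * g ∈ Δ := QuotientGroup.eq.mp hxg
    have hmem2 : g⁻¹ * x * g ∈ Δ := by
      have := Δ.inv_mem hmem
      simpa [mul_assoc] using this
    refine ⟨g⁻¹ * x * g, hmem2, ?_⟩
    have := (MulAut.conj g⁻¹).orderOf_eq x
    simp only [MulAut.conj_apply, inv_inv] at this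
    rw [this, hx4]
end
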